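/- arXiv:1306.1329 — 3 statements merged into one kernel-verified Lean document; each statement's English description precedes it below -/
import Mathlib

section
/- Let f:(0,1)→(0,∞) be nondecreasing with lim_{x→0+} f(x)=0, and suppose there exist sequences 0 < a_n < b_n ≤ 1 with a_n/b_n → 0 and f(a_n)/f(b_n) → 1. Then for every t∈(0,1), limsup_{x→0+} f(xt)/f(x) = 1; in particular f is not positively increasing. -/
open Filter Set

/-- If there are sequences with `aₙ/bₙ → 0` and `f aₙ / f bₙ → 1`, then
`limsup_{x→0+} f(xt)/f(x) = 1` for every `t ∈ (0,1)`; in particular `f` is not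
positively increasing. -/
theorem stmt_4 (f : ℝ → ℝ)
    (hmono : MonotoneOn f (Ioo 0 1))
    (hpos : ∀ x ∈ Ioo (0:ℝ) 1, 0 < f x)
    (hlim : Tendsto f (nhdsWithin 0 (Ioi 0)) (nhds 0))
    (h : ∃ a b : ℕ → ℝ, (∀ n, 0 < a n ∧ a n < b n ∧ b n ≤ 1) ∧
      Tendsto (fun n => a n / b n) atTop (nhds 0) ∧
      Tendsto (fun n => f (a n) / f (b n)) atTop (nhds 1)) :
    (∀ t ∈ Ioo (0:ℝ) 1,
      Filter.limsup (fun x => f (x * t) / f x) (nhdsWithin 0 (Ioi 0)) = 1) ∧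
    ¬ ∃ t ∈ Ioo (0:ℝ) 1,
      Filter.limsup (fun x => f (x * t) / f x) (nhdsWithin 0 (Ioi 0)) < 1 := by
  obtain ⟨a, b, hab, hratio0, hfratio⟩ := h
  have ha_pos : ∀ n, 0 < a n := fun n => (hab n).1
  have hab' : ∀ n, a n < b n := fun n => (hab n).2.1
  have hb_le : ∀ n, b n ≤ 1 := fun n => (hab n).2.2
  have hb_pos : ∀ n, 0 < b n := fun n => (ha_pos n).trans (hab' n)
  -- a → 0
  have ha0 : Tendsto a atTop (nhds 0) := by
    refine tendsto_of_tendsto_of_tendsto_of_le_of_le tendsto_const_nhds hratio0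
      (fun n => (ha_pos n).le) (fun n => ?_)
    rw [le_div_iff₀ (hb_pos n)]
    nlinarith [ha_pos n, hb_le n]
  have ha0' : Tendsto a atTop (nhdsWithin 0 (Ioi 0)) :=
    tendsto_nhdsWithin_of_tendsto_nhds_of_eventually_within _ ha0
      (Eventually.of_forall fun n => ha_pos n)
  have ha_lt1 : ∀ᶠ n in atTop, a n < 1 := ha0.eventually (eventually_lt_nhds (by norm_num))
  have hfa0 : Tendsto (fun n => f (a n)) atTop (nhds 0) := hlim.comp ha0'
  -- ratio eventually big
  have hrbig : ∀ᶠ n in atTop, (1:ℝ)/2 < f (a n) / f (b n) :=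
    hfratio.eventually (eventually_gt_nhds (by norm_num))
  -- f(b n) → 0
  have hfb0 : Tendsto (fun n => f (b n)) atTop (nhds 0) := by
    have key : ∀ᶠ n in atTop, f (a n) / (f (a n) / f (b n)) = f (b n) := by
      filter_upwards [hrbig] with n hn
      have hr : f (a n) / f (b n) ≠ 0 := by positivity
      have hfa : f (a n) ≠ 0 := fun hh => by simp [hh] at hr
      have hfb : f (b n) ≠ 0 := fun hh => by simp [hh] at hr
      field_simp
    have := hfa0.div hfratio one_ne_zero
    simp only [zero_div] at this
    exact Tendsto.congr' key this
  -- eventually b n < 1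
  have hb_lt1 : ∀ᶠ n in atTop, b n < 1 := by
    have hsmall : Tendsto (fun n => f (a n) * |(f 1)⁻¹|) atTop (nhds 0) := by
      simpa using hfa0.mul_const |(f 1)⁻¹|
    filter_upwards [hrbig, ha_lt1,
      hsmall.eventually (eventually_lt_nhds (show (0:ℝ) < 1/2 by norm_num))] with n h1 h2 h3
    rcases lt_or_eq_of_le (hb_le n) with h | h
    · exact h
    · exfalso
      have hfapos : 0 < f (a n) := hpos _ ⟨ha_pos n, h2⟩
      have : f (a n) / f (b n) = f (a n) * (f 1)⁻¹ := by rw [h]; ring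
      rw [this] at h1
      have : f (a n) * (f 1)⁻¹ ≤ f (a n) * |(f 1)⁻¹| :=
        mul_le_mul_of_nonneg_left (le_abs_self _) hfapos.le
      linarith
  -- b → 0
  have hb0 : Tendsto b atTop (nhds 0) := by
    rw [tendsto_order]
    constructor
    · intro c hc
      exact Eventually.of_forall fun n => hc.trans (hb_pos n)
    · intro c hc
      rcases le_or_gt 1 c with h | h
      · filter_upwards [hb_lt1] with n hn; exact hn.trans_le h
      · have hc2 : c/2 ∈ Ioo (0:ℝ) 1 := ⟨by linarith, by linarith⟩
        filter_upwards [hb_lt1,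
          hfb0.eventually (eventually_lt_nhds (hpos _ hc2))] with n h1 h2
        by_contra hcon
        push_neg at hcon
        have : f (c/2) ≤ f (b n) :=
          hmono hc2 ⟨hb_pos n, h1⟩ (by linarith)
        linarith
  have hb0' : Tendsto b atTop (nhdsWithin 0 (Ioi 0)) :=
    tendsto_nhdsWithin_of_tendsto_nhds_of_eventually_within _ hb0
      (Eventually.of_forall fun n => hb_pos n)
  -- main part
  have main : ∀ t ∈ Ioo (0:ℝ) 1,
      Filter.limsup (fun x => f (x * t) / f x) (nhdsWithin 0 (Ioi 0)) = 1 := by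
    intro t ht
    set l := nhdsWithin (0:ℝ) (Ioi 0)
    set g := fun x => f (x * t) / f x with hg
    have hIoo : Ioo (0:ℝ) 1 ∈ l := Ioo_mem_nhdsGT_of_mem ⟨le_refl 0, one_pos⟩
    have hxt : ∀ x ∈ Ioo (0:ℝ) 1, x * t ∈ Ioo (0:ℝ) 1 := fun x hx =>
      ⟨mul_pos hx.1 ht.1, lt_trans (by nlinarith [hx.1, ht.2] : x * t < x) hx.2⟩
    have hub : ∀ᶠ x in l, g x ≤ 1 := by
      filter_upwards [hIoo] with x hx
      have h1 : f (x * t) ≤ f x :=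
        hmono (hxt x hx) hx (by nlinarith [hx.1, ht.2])
      exact div_le_one_of_le₀ h1 (hpos x hx).le
    have hlb : ∀ᶠ x in l, (0:ℝ) ≤ g x := by
      filter_upwards [hIoo] with x hx
      exact div_nonneg (hpos _ (hxt x hx)).le (hpos x hx).le
    have hbdd : l.IsBoundedUnder (· ≤ ·) g := ⟨1, hub⟩
    -- g (b n) → 1
    have hgb : Tendsto (fun n => g (b n)) atTop (nhds 1) := by
      have hev : ∀ᶠ n in atTop, f (a n) / f (b n) ≤ g (b n) ∧ g (b n) ≤ 1 := by
        filter_upwards [hb_lt1, ha_lt1,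
          hratio0.eventually (eventually_lt_nhds ht.1)] with n h1 h2 h3
        have hbI : b n ∈ Ioo (0:ℝ) 1 := ⟨hb_pos n, h1⟩
        have hbtI : b n * t ∈ Ioo (0:ℝ) 1 := hxt _ hbI
        have haI : a n ∈ Ioo (0:ℝ) 1 := ⟨ha_pos n, h2⟩
        have hfbpos : 0 < f (b n) := hpos _ hbI
        have hle1 : a n < b n * t := by
          rw [div_lt_iff₀ (hb_pos n)] at h3; linarith [h3]
        have hfle1 : f (a n) ≤ f (b n * t) := hmono haI hbtI hle1.le
        have hfle2 : f (b n * t) ≤ f (b n) :=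
          hmono hbtI hbI (by nlinarith [hb_pos n, ht.2])
        constructor
        · show f (a n) / f (b n) ≤ f (b n * t) / f (b n)
          gcongr
        · exact div_le_one_of_le₀ hfle2 hfbpos.le
      refine tendsto_of_tendsto_of_tendsto_of_le_of_le' hfratio tendsto_const_nhds
        (hev.mono fun n hn => hn.1) (hev.mono fun n hn => hn.2)
    refine le_antisymm ?_ ?_
    · exact limsup_le_of_le (isCoboundedUnder_le_of_eventually_le l hlb) hub
    · refine le_of_forall_lt_imp_le_of_dense fun c hc => ?_
      have hfreq : ∃ᶠ x in l, c ≤ g x := by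
        refine hb0'.frequently ?_
        exact (hgb.eventually (eventually_ge_nhds hc)).frequently
      exact le_limsup_of_frequently_le hfreq hbdd
  refine ⟨main, ?_⟩
  rintro ⟨t, ht, hlt⟩
  rw [main t ht] at hlt
  exact lt_irrefl _ hlt
end

section
/- Let r∈L¹[-1,1] be weakly odd-dominated with function ρ as in the definition. Then I⁺(x)=∫₀^x |r| dt satisfies the condition (API+) (there exists t∈(0,1) with I⁺(xt) ≤ (1/2) I⁺(x) for all x∈(0,1)) if and only if I⁺_o(x)=∫₀^x r^o dt satisfies (API+). -/
open Filter Set MeasureTheory intervalIntegral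
private lemma api_iter (f : ℝ → ℝ) (t : ℝ) (ht : t ∈ Ioo (0:ℝ) 1)
    (h : ∀ x ∈ Ioo (0:ℝ) 1, f (x * t) ≤ (1/2) * f x) :
    ∀ n : ℕ, ∀ x ∈ Ioo (0:ℝ) 1, f (x * t ^ n) ≤ (1/2) ^ n * f x := by
  intro n
  induction n with
  | zero => intro x hx; simp
  | succ n ih =>
    intro x hx
    have hxt : x * t ∈ Ioo (0:ℝ) 1 := by
      constructor
      · exact mul_pos hx.1 ht.1
      · nlinarith [hx.1, hx.2, ht.1, ht.2]
    have h1 : f ((x * t) * t ^ n) ≤ (1/2) ^ n * f (x * t) := ih (x * t) hxt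
    have h2 : f (x * t) ≤ (1/2) * f x := h x hx
    have hpn : (0:ℝ) ≤ (1/2:ℝ) ^ n := by positivity
    have : x * t ^ (n+1) = (x * t) * t ^ n := by ring
    rw [this, pow_succ]
    nlinarith [mul_le_mul_of_nonneg_left h2 hpn]

private lemma api_transfer (f g : ℝ → ℝ) (a b : ℝ) (ha : 0 < a)
    (hfg : ∀ x ∈ Icc (0:ℝ) 1, a * g x ≤ f x ∧ f x ≤ b * g x)
    (hg0 : ∀ x ∈ Icc (0:ℝ) 1, 0 ≤ g x)
    (hf : ∃ t ∈ Ioo (0:ℝ) 1, ∀ x ∈ Ioo (0:ℝ) 1, f (x * t) ≤ (1/2) * f x) :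
    ∃ t ∈ Ioo (0:ℝ) 1, ∀ x ∈ Ioo (0:ℝ) 1, g (x * t) ≤ (1/2) * g x := by
  obtain ⟨t, ht, hft⟩ := hf
  obtain ⟨n0, hn0⟩ := pow_unbounded_of_one_lt (b / a) (by norm_num : (1:ℝ) < 2)
  set n := n0 + 1 with hn
  refine ⟨t ^ n, ⟨pow_pos ht.1 n, pow_lt_one₀ ht.1.le ht.2 (by omega)⟩, ?_⟩
  intro x hx
  have hxtn : x * t ^ n ∈ Ioo (0:ℝ) 1 := by
    constructor
    · exact mul_pos hx.1 (pow_pos ht.1 n)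
    · nlinarith [hx.1, hx.2, pow_pos ht.1 n, pow_lt_one₀ ht.1.le ht.2 (show n ≠ 0 by omega)]
  have h1 : a * g (x * t ^ n) ≤ f (x * t ^ n) := (hfg _ ⟨hxtn.1.le, hxtn.2.le⟩).1
  have h2 : f (x * t ^ n) ≤ (1/2) ^ n * f x := api_iter f t ht hft n x hx
  have h3 : f x ≤ b * g x := (hfg _ ⟨hx.1.le, hx.2.le⟩).2
  have hgx : 0 ≤ g x := hg0 _ ⟨hx.1.le, hx.2.le⟩
  have hpn : (0:ℝ) < (1/2:ℝ) ^ n := by positivity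
  have hb' : b < a * 2 ^ n0 := by rw [div_lt_iff₀ ha] at hn0; linarith
  have hpow : (1/2:ℝ) ^ n0 * 2 ^ n0 = 1 := by rw [← mul_pow]; norm_num
  have key : (1/2:ℝ) ^ n * b ≤ (1/2) * a := by
    rw [hn, pow_succ]
    nlinarith [pow_pos (show (0:ℝ) < 1/2 by norm_num) n0]
  have h4 : a * g (x * t ^ n) ≤ (1/2) ^ n * (b * g x) := by
    calc a * g (x * t ^ n) ≤ f (x * t ^ n) := h1
    _ ≤ (1/2) ^ n * f x := h2
    _ ≤ (1/2) ^ n * (b * g x) := by nlinarith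
  have h5 : (1/2:ℝ) ^ n * (b * g x) ≤ (1/2) * (a * g x) := by nlinarith [mul_le_mul_of_nonneg_right key hgx]
  nlinarith

private lemma comparison (r : ℝ → ℝ) (ρ : ℝ → ℝ)
    (hint : IntegrableOn r (Icc (-1) 1))
    (hsgn : ∀ᵐ x ∂(volume.restrict (Icc (-1:ℝ) 1)), 0 < x * r x)
    (hρ : ∀ ε ∈ Icc (0:ℝ) 1, ρ ε ∈ Ico (0:ℝ) 1)
    (hdom : ∀ ε ∈ Icc (0:ℝ) 1, ∀ x ∈ Icc (0:ℝ) ε,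
      (∫ t in (0:ℝ)..x, |(r t + r (-t)) / 2|) ≤ ρ ε * ∫ t in (0:ℝ)..x, (r t - r (-t)) / 2) :
    ∀ x ∈ Icc (0:ℝ) 1,
      (1 - ρ 1) * (∫ s in (0:ℝ)..x, (r s - r (-s)) / 2) ≤ (∫ s in (0:ℝ)..x, |r s|) ∧
      (∫ s in (0:ℝ)..x, |r s|) ≤ (1 + ρ 1) * (∫ s in (0:ℝ)..x, (r s - r (-s)) / 2) ∧
      0 ≤ (∫ s in (0:ℝ)..x, |r s|) ∧
      0 ≤ (∫ s in (0:ℝ)..x, (r s - r (-s)) / 2) := by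
  intro x hx
  obtain ⟨hx0, hx1⟩ := hx
  have hρ1 := hρ 1 ⟨zero_le_one, le_refl 1⟩
  -- integrability
  have h1 : IntervalIntegrable r volume 0 x := by
    rw [intervalIntegrable_iff_integrableOn_Ioc_of_le hx0]
    exact hint.mono_set (fun s hs => ⟨by linarith [hs.1], le_trans hs.2 hx1⟩)
  have h1' : IntervalIntegrable r volume 0 (-x) := by
    rw [intervalIntegrable_iff]
    apply hint.mono_set
    intro s hs
    rw [uIoc_comm, uIoc_of_le (by linarith : -x ≤ 0)] at hs
    exact ⟨by linarith [hs.1], by linarith [hs.2]⟩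
  have h2 : IntervalIntegrable (fun s => r (-s)) volume 0 x := by
    have := (IntervalIntegrable.iff_comp_neg).mp h1'
    simpa using this
  have ho : IntervalIntegrable (fun s => (r s - r (-s)) / 2) volume 0 x :=
    (h1.sub h2).div_const 2
  have he : IntervalIntegrable (fun s => (r s + r (-s)) / 2) volume 0 x :=
    (h1.add h2).div_const 2
  -- a.e. |r| = r on (0, x]
  have hae : ∀ᵐ s ∂(volume.restrict (Ioc (0:ℝ) x)), |r s| = r s := by
    have hsub : Ioc (0:ℝ) x ⊆ Icc (-1:ℝ) 1 := fun s hs =>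
      ⟨by linarith [hs.1], le_trans hs.2 hx1⟩
    have h' : ∀ᵐ s ∂(volume.restrict (Ioc (0:ℝ) x)), 0 < s * r s :=
      ae_restrict_of_ae_restrict_of_subset hsub hsgn
    have hmem : ∀ᵐ s ∂(volume.restrict (Ioc (0:ℝ) x)), s ∈ Ioc (0:ℝ) x :=
      ae_restrict_mem measurableSet_Ioc
    filter_upwards [h', hmem] with s hs hsm
    have hrpos : 0 < r s := by
      rcases mul_pos_iff.mp hs with ⟨_, h⟩ | ⟨h, _⟩
      · exact h
      · linarith [hsm.1]
    exact abs_of_pos hrpos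
  have hIeq : (∫ s in (0:ℝ)..x, |r s|) = ∫ s in (0:ℝ)..x, r s := by
    rw [integral_of_le hx0, integral_of_le hx0]
    exact integral_congr_ae hae
  -- split r = odd + even
  have hsplit : (∫ s in (0:ℝ)..x, r s) =
      (∫ s in (0:ℝ)..x, (r s - r (-s)) / 2) + (∫ s in (0:ℝ)..x, (r s + r (-s)) / 2) := by
    rw [← integral_add ho he]
    apply integral_congr
    intro s _
    ring
  -- bound even part
  have hEbound : |∫ s in (0:ℝ)..x, (r s + r (-s)) / 2| ≤
      ρ 1 * ∫ s in (0:ℝ)..x, (r s - r (-s)) / 2 := by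
    calc |∫ s in (0:ℝ)..x, (r s + r (-s)) / 2|
        ≤ ∫ s in (0:ℝ)..x, |(r s + r (-s)) / 2| := abs_integral_le_integral_abs hx0
      _ ≤ ρ 1 * ∫ s in (0:ℝ)..x, (r s - r (-s)) / 2 :=
          hdom 1 ⟨zero_le_one, le_refl 1⟩ x ⟨hx0, hx1⟩
  have hI0 : 0 ≤ (∫ s in (0:ℝ)..x, |r s|) :=
    integral_nonneg hx0 (fun s _ => abs_nonneg _)
  set I := (∫ s in (0:ℝ)..x, |r s|)
  set Io := (∫ s in (0:ℝ)..x, (r s - r (-s)) / 2)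
  set E := (∫ s in (0:ℝ)..x, (r s + r (-s)) / 2)
  have hIE : I = Io + E := by rw [hIeq, hsplit]
  have hE1 : E ≤ ρ 1 * Io := le_trans (le_abs_self E) hEbound
  have hE2 : -(ρ 1 * Io) ≤ E := neg_le_of_abs_le hEbound
  have hIo0 : 0 ≤ Io := by nlinarith [hρ1.1, hρ1.2]
  refine ⟨by nlinarith, by nlinarith, hI0, hIo0⟩

/-- For a weakly odd-dominated weight, `I⁺` satisfies (API+) iff `I⁺ₒ` satisfies (API+). -/
theorem stmt_9 (r : ℝ → ℝ) (ρ : ℝ → ℝ)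
    (hint : IntegrableOn r (Icc (-1) 1))
    (hsgn : ∀ᵐ x ∂(volume.restrict (Icc (-1:ℝ) 1)), 0 < x * r x)
    (hρ : ∀ ε ∈ Icc (0:ℝ) 1, ρ ε ∈ Ico (0:ℝ) 1)
    (hdom : ∀ ε ∈ Icc (0:ℝ) 1, ∀ x ∈ Icc (0:ℝ) ε,
      (∫ t in (0:ℝ)..x, |(r t + r (-t)) / 2|) ≤ ρ ε * ∫ t in (0:ℝ)..x, (r t - r (-t)) / 2) :
    ((∃ t ∈ Ioo (0:ℝ) 1, ∀ x ∈ Ioo (0:ℝ) 1,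
        (∫ s in (0:ℝ)..(x * t), |r s|) ≤ (1 / 2) * ∫ s in (0:ℝ)..x, |r s|) ↔
      (∃ t ∈ Ioo (0:ℝ) 1, ∀ x ∈ Ioo (0:ℝ) 1,
        (∫ s in (0:ℝ)..(x * t), (r s - r (-s)) / 2) ≤
          (1 / 2) * ∫ s in (0:ℝ)..x, (r s - r (-s)) / 2)) := by
  have hcomp := comparison r ρ hint hsgn hρ hdom
  have hρ1 := hρ 1 ⟨zero_le_one, le_refl 1⟩
  set I := fun x : ℝ => (∫ s in (0:ℝ)..x, |r s|) with hI
  set Io := fun x : ℝ => (∫ s in (0:ℝ)..x, (r s - r (-s)) / 2) with hIo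
  constructor
  · intro h
    exact api_transfer I Io (1 - ρ 1) (1 + ρ 1) (by linarith [hρ1.2])
      (fun x hx => ⟨(hcomp x hx).1, (hcomp x hx).2.1⟩)
      (fun x hx => (hcomp x hx).2.2.2) h
  · intro h
    refine api_transfer Io I (1 / (1 + ρ 1)) (1 / (1 - ρ 1))
      (one_div_pos.mpr (by linarith [hρ1.1])) ?_ (fun x hx => (hcomp x hx).2.2.1) h
    intro x hx
    obtain ⟨c1, c2, c3, c4⟩ := hcomp x hx
    constructor
    · rw [div_mul_eq_mul_div, div_le_iff₀ (by linarith [hρ1.1] : (0:ℝ) < 1 + ρ 1)]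
      nlinarith
    · rw [div_mul_eq_mul_div, le_div_iff₀ (by linarith [hρ1.2] : (0:ℝ) < 1 - ρ 1)]
      nlinarith
end

section
/- Let r(x) = π/((1-x) log²((1-x)/e)) for x∈(0,1). Then ∫₀^1 r(t) dt = π, and the function I₁⁻(x) = ∫_{1-x}^1 r dt = π/(1 - log x) satisfies lim_{x→0+} I₁⁻(xt)/I₁⁻(x) = 1 for every t∈(0,1); hence I₁⁻ is not positively increasing. -/
open Filter Set MeasureTheory intervalIntegral

noncomputable def Gf : ℝ → ℝ := fun t =>
  if t < 1 then -Real.pi * (1 - Real.log (1 - t))⁻¹ else 0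

lemma Gf_deriv {t : ℝ} (ht0 : 0 ≤ t) (ht1 : t < 1) :
    HasDerivAt Gf (Real.pi / ((1 - t) * (Real.log ((1 - t) / Real.exp 1)) ^ 2)) t := by
  have h1t : (0:ℝ) < 1 - t := by linarith
  have hlog : Real.log (1 - t) ≤ 0 := Real.log_nonpos h1t.le (by linarith)
  have hden : (0:ℝ) < 1 - Real.log (1 - t) := by linarith
  have d1 : HasDerivAt (fun s : ℝ => 1 - Real.log (1 - s)) ((1 - t)⁻¹) t := by
    have : HasDerivAt (fun s : ℝ => Real.log (1 - s)) ((1 - t)⁻¹ * (-1)) t :=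
      (Real.hasDerivAt_log h1t.ne').comp t ((hasDerivAt_id t).const_sub 1)
    simpa using (this.const_sub 1)
  have d2 := ((d1.inv hden.ne').const_mul (-Real.pi))
  have heq : -Real.pi * (-((1 - t)⁻¹) / (1 - Real.log (1 - t)) ^ 2)
      = Real.pi / ((1 - t) * (Real.log ((1 - t) / Real.exp 1)) ^ 2) := by
    rw [Real.log_div h1t.ne' (Real.exp_ne_zero 1), Real.log_exp]
    have : (Real.log (1 - t) - 1) ^ 2 = (1 - Real.log (1 - t)) ^ 2 := by ring
    rw [this]
    field_simp
  rw [← heq]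
  refine d2.congr_of_eventuallyEq ?_
  filter_upwards [IsOpen.mem_nhds isOpen_Iio ht1] with s hs
  simp only [Gf]
  rw [if_pos (mem_Iio.mp hs)]
  rfl

lemma Gf_tendsto : Tendsto Gf (nhdsWithin 1 (Iio 1)) (nhds 0) := by
  have h1 : Tendsto (fun t : ℝ => 1 - t) (nhdsWithin 1 (Iio 1)) (nhdsWithin 0 (Ioi 0)) := by
    rw [tendsto_nhdsWithin_iff]
    constructor
    · have h : Continuous (fun t : ℝ => 1 - t) := continuous_const.sub continuous_id
      have : Tendsto (fun t : ℝ => 1 - t) (nhds 1) (nhds 0) := by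
        simpa using h.tendsto (1:ℝ)
      exact this.mono_left nhdsWithin_le_nhds
    · filter_upwards [self_mem_nhdsWithin] with t ht
      exact sub_pos.mpr (mem_Iio.mp ht)
  have hlogbot : Tendsto (fun t : ℝ => Real.log (1 - t)) (nhdsWithin 1 (Iio 1)) atBot :=
    Real.tendsto_log_nhdsGT_zero.comp h1
  have h2 : Tendsto (fun t : ℝ => 1 - Real.log (1 - t)) (nhdsWithin 1 (Iio 1)) atTop := by
    have hneg : Tendsto (fun t : ℝ => -Real.log (1 - t)) (nhdsWithin 1 (Iio 1)) atTop :=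
      tendsto_neg_atBot_atTop.comp hlogbot
    exact (tendsto_atTop_add_const_left _ 1 hneg).congr (fun t => by ring)
  have h3 : Tendsto (fun t : ℝ => -Real.pi * (1 - Real.log (1 - t))⁻¹)
      (nhdsWithin 1 (Iio 1)) (nhds 0) := by
    simpa using (h2.inv_tendsto_atTop.const_mul (-Real.pi))
  refine h3.congr' ?_
  filter_upwards [self_mem_nhdsWithin] with t ht
  simp only [Gf]
  rw [if_pos (mem_Iio.mp ht)]

lemma key_int {x : ℝ} (hx0 : 0 < x) (hx1 : x ≤ 1) :
    (∫ t in (1 - x)..(1:ℝ), Real.pi / ((1 - t) * (Real.log ((1 - t) / Real.exp 1)) ^ 2))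
      = Real.pi / (1 - Real.log x) := by
  have hab : 1 - x < 1 := by linarith
  have ha0 : (0:ℝ) ≤ 1 - x := by linarith
  have hderiv : ∀ s ∈ Ioo (1 - x) (1:ℝ),
      HasDerivAt Gf (Real.pi / ((1 - s) * (Real.log ((1 - s) / Real.exp 1)) ^ 2)) s :=
    fun s hs => Gf_deriv (le_trans ha0 hs.1.le) hs.2
  have hpos : ∀ s ∈ Ioo (1 - x) (1:ℝ),
      0 ≤ Real.pi / ((1 - s) * (Real.log ((1 - s) / Real.exp 1)) ^ 2) := by
    intro s hs
    have h1s : (0:ℝ) < 1 - s := by linarith [hs.2]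
    positivity
  have hcont : ContinuousOn Gf (Icc (1 - x) 1) := by
    intro s hs
    rcases eq_or_lt_of_le hs.2 with h | h
    · subst h
      have h1 : ContinuousWithinAt Gf (Iio 1) 1 := by
        unfold ContinuousWithinAt
        have : Gf 1 = 0 := by simp [Gf]
        rw [this]; exact Gf_tendsto
      exact (continuousWithinAt_Iio_iff_Iic.mp h1).mono Icc_subset_Iic_self
    · exact (Gf_deriv (le_trans ha0 hs.1) h).continuousAt.continuousWithinAt
  have hint : IntervalIntegrable
      (fun s => Real.pi / ((1 - s) * (Real.log ((1 - s) / Real.exp 1)) ^ 2))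
      volume (1 - x) 1 := by
    apply intervalIntegrable_deriv_of_nonneg
    · rwa [uIcc_of_le hab.le]
    · rwa [min_eq_left hab.le, max_eq_right hab.le]
    · rwa [min_eq_left hab.le, max_eq_right hab.le]
  have hA : Tendsto Gf (nhdsWithin (1 - x) (Ioi (1 - x))) (nhds (Gf (1 - x))) :=
    (Gf_deriv ha0 hab).continuousAt.continuousWithinAt
  have := integral_eq_sub_of_hasDerivAt_of_tendsto hab hderiv hint hA Gf_tendsto
  rw [this]
  have : Gf (1 - x) = -Real.pi * (1 - Real.log x)⁻¹ := by
    simp only [Gf, if_pos hab]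
    norm_num
  rw [this]
  have hlx : Real.log x ≤ 0 := Real.log_nonpos hx0.le hx1
  have : (0:ℝ) < 1 - Real.log x := by linarith
  field_simp
  ring

lemma ratio_tendsto {t : ℝ} (ht : t ∈ Ioo (0:ℝ) 1) :
    Tendsto
      (fun x => (∫ s in (1 - x * t)..(1:ℝ),
          Real.pi / ((1 - s) * (Real.log ((1 - s) / Real.exp 1)) ^ 2)) /
        ∫ s in (1 - x)..(1:ℝ),
          Real.pi / ((1 - s) * (Real.log ((1 - s) / Real.exp 1)) ^ 2))
      (nhdsWithin 0 (Ioi 0)) (nhds 1) := by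
  obtain ⟨ht0, ht1⟩ := ht
  set c : ℝ := -Real.log t with hc
  have hcpos : 0 < c := by
    simp only [hc, neg_pos]
    exact Real.log_neg ht0 ht1
  have hu : Tendsto (fun x : ℝ => 1 - Real.log x) (nhdsWithin 0 (Ioi 0)) atTop := by
    have hneg : Tendsto (fun x : ℝ => -Real.log x) (nhdsWithin 0 (Ioi 0)) atTop :=
      tendsto_neg_atBot_atTop.comp Real.tendsto_log_nhdsGT_zero
    exact (tendsto_atTop_add_const_left _ 1 hneg).congr (fun x => by ring)
  have hmain : Tendsto (fun x : ℝ => (1 - Real.log x) / (1 - Real.log x + c))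
      (nhdsWithin 0 (Ioi 0)) (nhds 1) := by
    have hdc : Tendsto (fun x : ℝ => c / (1 - Real.log x + c))
        (nhdsWithin 0 (Ioi 0)) (nhds 0) := by
      have : Tendsto (fun x : ℝ => 1 - Real.log x + c) (nhdsWithin 0 (Ioi 0)) atTop :=
        tendsto_atTop_add_const_right _ c hu
      simpa [div_eq_mul_inv] using this.inv_tendsto_atTop.const_mul c
    have h1 : Tendsto (fun x : ℝ => 1 - c / (1 - Real.log x + c))
        (nhdsWithin 0 (Ioi 0)) (nhds 1) := by
      simpa using (tendsto_const_nhds (x := (1:ℝ)) (f := nhdsWithin (0:ℝ) (Ioi 0))).sub hdc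
    refine h1.congr' ?_
    filter_upwards [hu.eventually_ge_atTop 1] with x hx
    have hne : 1 - Real.log x + c ≠ 0 := by positivity
    field_simp
    ring
  refine hmain.congr' ?_
  have hmem : Ioc (0:ℝ) 1 ∈ nhdsWithin (0:ℝ) (Ioi 0) := by
    refine mem_nhdsWithin.mpr ⟨Iio 1, isOpen_Iio, by norm_num, ?_⟩
    rintro x ⟨hx1, hx0⟩
    exact ⟨hx0, le_of_lt hx1⟩
  filter_upwards [hmem] with x hx
  obtain ⟨hx0, hx1⟩ := hx
  have hxt0 : 0 < x * t := mul_pos hx0 ht0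
  have hxt1 : x * t ≤ 1 := le_trans (by nlinarith) hx1
  rw [key_int hx0 hx1, key_int hxt0 hxt1]
  rw [Real.log_mul hx0.ne' ht0.ne']
  have hlx : Real.log x ≤ 0 := Real.log_nonpos hx0.le hx1
  have hb : (0:ℝ) < 1 - Real.log x := by linarith
  have ha : (0:ℝ) < 1 - (Real.log x + Real.log t) := by linarith
  have hcc : 1 - (Real.log x + Real.log t) = 1 - Real.log x + c := by simp [hc]; ring
  rw [hcc] at ha ⊢
  rw [div_div_div_comm]
  rw [div_self Real.pi_ne_zero]
  rw [one_div_div]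

/-- For `r x = π/((1-x) log²((1-x)/e))` on `(0,1)`: `∫₀¹ r = π`, the boundary
primitive `I₁⁻ x = ∫_{1-x}^1 r = π/(1 - log x)` is slowly varying at 0, hence not
positively increasing. -/
theorem stmt_12 :
    (∫ t in (0:ℝ)..1, Real.pi / ((1 - t) * (Real.log ((1 - t) / Real.exp 1)) ^ 2))
        = Real.pi ∧
    (∀ x ∈ Ioc (0:ℝ) 1,
      (∫ t in (1 - x)..(1:ℝ), Real.pi / ((1 - t) * (Real.log ((1 - t) / Real.exp 1)) ^ 2))
        = Real.pi / (1 - Real.log x)) ∧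
    (∀ t ∈ Ioo (0:ℝ) 1,
      Tendsto
        (fun x => (∫ s in (1 - x * t)..(1:ℝ),
            Real.pi / ((1 - s) * (Real.log ((1 - s) / Real.exp 1)) ^ 2)) /
          ∫ s in (1 - x)..(1:ℝ),
            Real.pi / ((1 - s) * (Real.log ((1 - s) / Real.exp 1)) ^ 2))
        (nhdsWithin 0 (Ioi 0)) (nhds 1)) ∧
    ¬ ∃ t ∈ Ioo (0:ℝ) 1,
      Filter.limsup
        (fun x => (∫ s in (1 - x * t)..(1:ℝ),
            Real.pi / ((1 - s) * (Real.log ((1 - s) / Real.exp 1)) ^ 2)) /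
          ∫ s in (1 - x)..(1:ℝ),
            Real.pi / ((1 - s) * (Real.log ((1 - s) / Real.exp 1)) ^ 2))
        (nhdsWithin 0 (Ioi 0)) < 1 := by
  refine ⟨?_, ?_, ?_, ?_⟩
  · have := key_int (x := 1) one_pos le_rfl
    simpa using this
  · intro x hx
    exact key_int hx.1 hx.2
  · intro t ht
    exact ratio_tendsto ht
  · rintro ⟨t, ht, hlt⟩
    rw [(ratio_tendsto ht).limsup_eq] at hlt
    exact lt_irrefl 1 hlt
end
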